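/- With the same setup (forms u and û = u + v, biorthogonal families P, P̂ with matrices H_n, Ĥ_n, CD kernel K_{n−1} of u), one has (P̂^{[2]}_n(z))ᵀ = (P^{[2]}_n(z))ᵀ − ⟨K_{n−1}(x,z), P̂^{[2]}_n(y)⟩_v. -/

import Mathlib

open Polynomial Matrix Finset

namespace Paper

abbrev Mat (p : ℕ) := Matrix (Fin p) (Fin p) ℂ
abbrev MatPoly (p : ℕ) := Matrix (Fin p) (Fin p) (Polynomial ℂ)

variable {p : ℕ}

/-- Embed a constant matrix as a matrix polynomial. -/
noncomputable def cm (A : Mat p) : MatPoly p := A.map Polynomial.C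

/-- The monomial `I_p x^k` as a matrix polynomial. -/
noncomputable def monoM (p k : ℕ) : MatPoly p := Matrix.diagonal (fun _ => (Polynomial.X : Polynomial ℂ) ^ k)

/-- The `k`-th matrix coefficient of a matrix polynomial. -/
noncomputable def coeffM (P : MatPoly p) (k : ℕ) : Mat p := Matrix.of fun i j => (P i j).coeff k

/-- Entrywise derivative of a matrix polynomial. -/
noncomputable def dM : MatPoly p → MatPoly p := fun P => Matrix.of fun i j => Polynomial.derivative (P i j)

/-- Evaluation of a matrix polynomial at a scalar point. -/
noncomputable def evM (z : ℂ) (P : MatPoly p) : Mat p := Matrix.of fun i j => (P i j).eval z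

/-- `P` is monic of exact degree `n`. -/
def MonicDeg (P : MatPoly p) (n : ℕ) : Prop :=
  coeffM P n = 1 ∧ ∀ k, n < k → coeffM P k = 0

/-- Sesquilinear form on matrix polynomials: left `ℂ^{p×p}`-linear in the first slot,
`⟨P, AQ + R⟩ = ⟨P,Q⟩Aᵀ + ⟨P,R⟩` in the second slot. -/
def IsSesq (S : MatPoly p → MatPoly p → Mat p) : Prop :=
  (∀ (A : Mat p) (P Q R : MatPoly p), S (cm A * P + Q) R = A * S P R + S Q R) ∧
  (∀ (A : Mat p) (P Q R : MatPoly p), S P (cm A * Q + R) = S P Q * Aᵀ + S P R)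

end Paper

namespace Paper

variable {p : ℕ}

lemma cm_one : cm (1 : Mat p) = 1 := by
  simp [cm, Matrix.map_one]

lemma cm_transpose (A : Mat p) : (cm A)ᵀ = cm Aᵀ := by
  ext i j; simp [cm]

lemma coeffM_cm_mul (A : Mat p) (P : MatPoly p) (k : ℕ) :
    coeffM (cm A * P) k = A * coeffM P k := by
  ext i j
  simp [coeffM, cm, Matrix.mul_apply, Polynomial.finset_sum_coeff]

lemma coeffM_sub (P Q : MatPoly p) (k : ℕ) :
    coeffM (P - Q) k = coeffM P k - coeffM Q k := by
  ext i j; simp [coeffM]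

lemma coeffM_sum {s : Finset ℕ} (f : ℕ → MatPoly p) (k : ℕ) :
    coeffM (∑ j ∈ s, f j) k = ∑ j ∈ s, coeffM (f j) k := by
  ext i j
  simp [coeffM, Matrix.sum_apply, Polynomial.finset_sum_coeff]

lemma matpoly_ext {P Q : MatPoly p} (h : ∀ k, coeffM P k = coeffM Q k) : P = Q := by
  apply Matrix.ext
  intro i j
  apply Polynomial.ext
  intro k
  have := congrFun (congrFun (h k) i) j
  simpa [coeffM] using this

lemma span (P : ℕ → MatPoly p) (hP : ∀ k, MonicDeg (P k) k) :
    ∀ n (Q : MatPoly p), (∀ k, n < k → coeffM Q k = 0) →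
      ∃ A : ℕ → Mat p, Q = ∑ j ∈ Finset.range (n+1), cm (A j) * P j := by
  intro n
  induction n with
  | zero =>
    intro Q hQ
    refine ⟨fun _ => coeffM Q 0, ?_⟩
    apply matpoly_ext
    intro k
    rw [Finset.sum_range_one, coeffM_cm_mul]
    rcases Nat.eq_zero_or_pos k with rfl | hk
    · rw [(hP 0).1, mul_one]
    · rw [hQ k hk, (hP 0).2 k hk, mul_zero]
  | succ n ih =>
    intro Q hQ
    set Q' := Q - cm (coeffM Q (n+1)) * P (n+1) with hQ'def
    have hQ' : ∀ k, n < k → coeffM Q' k = 0 := by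
      intro k hk
      rw [hQ'def, coeffM_sub, coeffM_cm_mul]
      rcases eq_or_lt_of_le (Nat.succ_le_of_lt hk) with h | h
      · rw [← h, (hP (n+1)).1, mul_one, sub_self]
      · rw [hQ k h, (hP (n+1)).2 k h, mul_zero, sub_self]
    obtain ⟨A, hA⟩ := ih Q' hQ'
    refine ⟨fun j => if j = n+1 then coeffM Q (n+1) else A j, ?_⟩
    show Q = ∑ j ∈ Finset.range (n+1+1), cm (if j = n+1 then coeffM Q (n+1) else A j) * P j
    have h1 : ∑ j ∈ Finset.range (n+1+1), cm (if j = n+1 then coeffM Q (n+1) else A j) * P j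
        = (∑ j ∈ Finset.range (n+1), cm (A j) * P j) + cm (coeffM Q (n+1)) * P (n+1) := by
      rw [Finset.sum_range_succ, if_pos rfl]
      congr 1
      refine Finset.sum_congr rfl fun j hj => ?_
      simp only [Finset.mem_range] at hj
      rw [if_neg (by omega)]
    rw [h1, ← hA, hQ'def]
    abel

lemma sesq_zero_left {S : MatPoly p → MatPoly p → Mat p} (hS : IsSesq S) (R : MatPoly p) :
    S 0 R = 0 := by
  have := hS.1 1 0 0 R
  simp [cm_one] at this
  linear_combination (norm := abel) this

lemma sesq_zero_right {S : MatPoly p → MatPoly p → Mat p} (hS : IsSesq S) (R : MatPoly p) :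
    S R 0 = 0 := by
  have := hS.2 1 R 0 0
  simp [cm_one] at this
  linear_combination (norm := abel) this

lemma sesq_sum_left {S : MatPoly p → MatPoly p → Mat p} (hS : IsSesq S)
    (s : Finset ℕ) (A : ℕ → Mat p) (P : ℕ → MatPoly p) (R : MatPoly p) :
    S (∑ j ∈ s, cm (A j) * P j) R = ∑ j ∈ s, A j * S (P j) R := by
  induction s using Finset.induction_on with
  | empty => simpa using sesq_zero_left hS R
  | insert _ _ hj ih =>
    rw [Finset.sum_insert hj, Finset.sum_insert hj, hS.1, ih]

lemma sesq_sum_right {S : MatPoly p → MatPoly p → Mat p} (hS : IsSesq S)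
    (s : Finset ℕ) (A : ℕ → Mat p) (Q : ℕ → MatPoly p) (R : MatPoly p) :
    S R (∑ j ∈ s, cm (A j) * Q j) = ∑ j ∈ s, S R (Q j) * (A j)ᵀ := by
  induction s using Finset.induction_on with
  | empty => simpa using sesq_zero_right hS R
  | insert _ _ hj ih =>
    rw [Finset.sum_insert hj, Finset.sum_insert hj, hS.2, ih]


end Paper

open Paper in
/-- For the additive perturbation `û = u + v` (`v := û − u`),
`(P̂^{[2]}_n(z))ᵀ = (P^{[2]}_n(z))ᵀ − ⟨K_{n−1}(x,z), P̂^{[2]}_n(y)⟩_v`, with `K_{n−1}` the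
CD kernel of `u`, the pairing being expanded via the sesquilinearity of the form. -/
theorem statement5 (p : ℕ) (u uh : MatPoly p → MatPoly p → Mat p)
    (hu : IsSesq u) (huh : IsSesq uh)
    (P1 P2 hP1 hP2 : ℕ → MatPoly p) (H Hh : ℕ → Mat p)
    (hmon1 : ∀ k, MonicDeg (P1 k) k) (hmon2 : ∀ k, MonicDeg (P2 k) k)
    (hmon1h : ∀ k, MonicDeg (hP1 k) k) (hmon2h : ∀ k, MonicDeg (hP2 k) k)
    (hH : ∀ k, IsUnit (H k)) (hHh : ∀ k, IsUnit (Hh k))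
    (hbio : ∀ k l, u (P1 k) (P2 l) = if k = l then H k else 0)
    (hbioh : ∀ k l, uh (hP1 k) (hP2 l) = if k = l then Hh k else 0)
    (n : ℕ) :
    (hP2 n)ᵀ = (P2 n)ᵀ
      - ∑ k ∈ Finset.range n,
          (P2 k)ᵀ * cm ((H k)⁻¹ * (uh (P1 k) (hP2 n) - u (P1 k) (hP2 n))) := by
  classical
  obtain ⟨A, hA⟩ := span P2 hmon2 n (hP2 n) (fun k hk => (hmon2h n).2 k hk)
  -- leading coefficient is the identity
  have hAn : A n = 1 := by
    have h1 : coeffM (hP2 n) n = ∑ j ∈ Finset.range (n+1), A j * coeffM (P2 j) n := by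
      rw [hA, coeffM_sum]
      exact Finset.sum_congr rfl fun j _ => coeffM_cm_mul _ _ _
    rw [(hmon2h n).1, Finset.sum_range_succ, (hmon2 n).1, mul_one] at h1
    have h2 : ∑ j ∈ Finset.range n, A j * coeffM (P2 j) n = 0 :=
      Finset.sum_eq_zero fun j hj => by
        rw [(hmon2 j).2 n (Finset.mem_range.1 hj), mul_zero]
    rw [h2, zero_add] at h1
    exact h1.symm
  -- Fourier coefficients w.r.t. u
  have hu1 : ∀ k, k < n+1 → u (P1 k) (hP2 n) = H k * (A k)ᵀ := by
    intro k hk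
    rw [hA, sesq_sum_right hu]
    rw [Finset.sum_eq_single_of_mem k (Finset.mem_range.2 hk)
      (fun b _ hb => by rw [hbio, if_neg (fun h => hb h.symm), Matrix.zero_mul])]
    rw [hbio, if_pos rfl]
  -- orthogonality w.r.t. uh for k < n
  have huh0 : ∀ k, k < n → uh (P1 k) (hP2 n) = 0 := by
    intro k hk
    obtain ⟨B, hB⟩ := span hP1 hmon1h k (P1 k) (fun l hl => (hmon1 k).2 l hl)
    rw [hB, sesq_sum_left huh]
    refine Finset.sum_eq_zero fun j hj => ?_
    have hj' := Finset.mem_range.1 hj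
    rw [hbioh, if_neg (by omega), Matrix.mul_zero]
  -- each term of the RHS sum
  have hterm : ∀ k ∈ Finset.range n,
      (P2 k)ᵀ * cm ((H k)⁻¹ * (uh (P1 k) (hP2 n) - u (P1 k) (hP2 n)))
        = -((P2 k)ᵀ * cm ((A k)ᵀ)) := by
    intro k hk
    have hk' := Finset.mem_range.1 hk
    have hHinv : (H k)⁻¹ * (H k * (A k)ᵀ) = (A k)ᵀ := by
      rw [← Matrix.mul_assoc,
        Matrix.nonsing_inv_mul _ ((Matrix.isUnit_iff_isUnit_det _).1 (hH k)),
        Matrix.one_mul]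
    rw [huh0 k hk', hu1 k (by omega), zero_sub, Matrix.mul_neg, hHinv]
    have : cm (-(A k)ᵀ) = -cm ((A k)ᵀ) := by
      ext i j; simp [cm]
    rw [this, mul_neg]
  rw [Finset.sum_congr rfl hterm, Finset.sum_neg_distrib, sub_neg_eq_add]
  rw [hA, Matrix.transpose_sum, Finset.sum_range_succ]
  have hT : ∀ j, (cm (A j) * P2 j)ᵀ = (P2 j)ᵀ * cm ((A j)ᵀ) := by
    intro j
    rw [Matrix.transpose_mul, cm_transpose]
  simp only [hT, hAn, Matrix.transpose_one, cm_one, mul_one, one_mul]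
  abel
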